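/- Let K be a field and L a finite-dimensional Lie algebra over K. Then L has no nonzero abelian direct summand (i.e. there is no decomposition L = A ⊕ H into a direct sum of two ideals with A nonzero abelian) if and only if Z(L) ⊆ [L,L]. -/

import Mathlib

/-- A finite-dimensional Lie algebra `L` over a field `K` has no nonzero
abelian direct summand (no decomposition `L = A ⊕ H` into a direct sum of two ideals with `A` nonzero
abelian) if and only if `Z(L) ⊆ [L, L]`. -/
theorem stmt1 (K L : Type*) [Field K] [LieRing L] [LieAlgebra K L]
    [FiniteDimensional K L] :
    (¬ ∃ A H : LieIdeal K L, A ≠ ⊥ ∧ (∀ x ∈ A, ∀ y ∈ A, ⁅x, y⁆ = 0) ∧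
        A ⊓ H = ⊥ ∧ A ⊔ H = ⊤) ↔
      LieAlgebra.center K L ≤ ⁅(⊤ : LieIdeal K L), (⊤ : LieIdeal K L)⁆ := by
  constructor
  · -- contrapositive: if center ⊄ derived, construct a summand
    intro hno
    by_contra hle
    apply hno
    obtain ⟨z, hzc, hzd⟩ := SetLike.not_le_iff_exists.mp hle
    have hz0 : z ≠ 0 := fun h => hzd (h ▸ (⁅(⊤ : LieIdeal K L), (⊤ : LieIdeal K L)⁆).zero_mem)
    have hzcent : ∀ x : L, ⁅x, z⁆ = 0 := fun x => hzc x
    set W : Submodule K L := ((⁅(⊤ : LieIdeal K L), (⊤ : LieIdeal K L)⁆ : LieIdeal K L) : Submodule K L) with hW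
    set S : Submodule K L := K ∙ z with hS
    obtain ⟨C, hC⟩ := Submodule.exists_isCompl (W ⊔ S)
    -- A := span z as an ideal
    have hAlie : ∀ (x m : L), m ∈ S → ⁅x, m⁆ ∈ S := by
      intro x m hm
      obtain ⟨a, rfl⟩ := Submodule.mem_span_singleton.mp hm
      rw [lie_smul, hzcent, smul_zero]
      exact S.zero_mem
    refine ⟨{ toSubmodule := S, lie_mem := fun {x m} hm => hAlie x m hm },
      { toSubmodule := W ⊔ C,
        lie_mem := fun {x m} _ => le_sup_left (α := Submodule K L)
          (LieSubmodule.lie_mem_lie (LieSubmodule.mem_top x) (LieSubmodule.mem_top m)) },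
      ?_, ?_, ?_, ?_⟩
    · intro h
      apply hz0
      have : z ∈ (⊥ : LieIdeal K L) := h ▸ (Submodule.mem_span_singleton_self z)
      simpa using this
    · intro x hx y hy
      obtain ⟨a, rfl⟩ := Submodule.mem_span_singleton.mp hy
      rw [lie_smul, hzcent, smul_zero]
    · apply (LieSubmodule.toSubmodule_inj _ _).mp
      rw [LieSubmodule.inf_toSubmodule]
      simp only [LieSubmodule.bot_toSubmodule]
      rw [eq_bot_iff]
      rintro x ⟨hxS, hxH⟩
      obtain ⟨a, rfl⟩ := Submodule.mem_span_singleton.mp hxS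
      rcases eq_or_ne a 0 with rfl | ha
      · simp
      · exfalso
        have hzWC : z ∈ W ⊔ C := by
          have := (W ⊔ C).smul_mem a⁻¹ hxH
          rwa [inv_smul_smul₀ ha] at this
        have hzWS : z ∈ W ⊔ S := (le_sup_right : S ≤ W ⊔ S) (Submodule.mem_span_singleton_self z)
        have : z ∈ (W ⊔ C) ⊓ (W ⊔ S) := ⟨hzWC, hzWS⟩
        rw [sup_inf_assoc_of_le C (le_sup_left : W ≤ W ⊔ S), inf_comm,
          hC.inf_eq_bot, sup_bot_eq] at this
        exact hzd this
    · apply (LieSubmodule.toSubmodule_inj _ _).mp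
      rw [LieSubmodule.sup_toSubmodule]
      simp only [LieSubmodule.top_toSubmodule]
      rw [eq_top_iff, ← hC.sup_eq_top]
      have : (W ⊔ S) ⊔ C = S ⊔ (W ⊔ C) := by
        rw [sup_comm W S, sup_assoc]
      rw [this]
  · rintro hZD ⟨A, H, hA0, hab, hinf, hsup⟩
    -- A is central
    have hAc : (A : LieIdeal K L) ≤ LieAlgebra.center K L := by
      intro a ha
      rw [← LieAlgebra.self_module_ker_eq_center, LieModule.mem_ker]
      intro y
      have hy : y ∈ A ⊔ H := hsup ▸ LieSubmodule.mem_top y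
      rw [LieSubmodule.mem_sup] at hy
      obtain ⟨b, hb, c, hc, rfl⟩ := hy
      rw [lie_add]
      have h1 : ⁅a, b⁆ = 0 := hab a ha b hb
      have h2 : ⁅a, c⁆ = 0 := by
        have hmem : ⁅a, c⁆ ∈ A ⊓ H := by
          constructor
          · have : ⁅c, a⁆ ∈ A := A.lie_mem ha
            simpa using A.neg_mem this
          · exact H.lie_mem hc
        rw [hinf] at hmem
        simpa using hmem
      rw [h1, h2, add_zero]
    -- derived ideal lies in H
    have hDH : ⁅(⊤ : LieIdeal K L), (⊤ : LieIdeal K L)⁆ ≤ H := by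
      rw [LieSubmodule.lie_le_iff]
      intro x _ m _
      have hx : x ∈ A ⊔ H := hsup ▸ LieSubmodule.mem_top x
      have hmm : m ∈ A ⊔ H := hsup ▸ LieSubmodule.mem_top m
      rw [LieSubmodule.mem_sup] at hx hmm
      obtain ⟨a, ha, h, hh, rfl⟩ := hx
      obtain ⟨a', ha', h', hh', rfl⟩ := hmm
      have haz : ∀ y : L, ⁅a, y⁆ = 0 := by
        have := hAc ha
        intro y
        have h1 : ⁅y, a⁆ = 0 := this y
        rw [← lie_skew, h1, neg_zero]
      have haz' : ∀ y : L, ⁅y, a'⁆ = 0 := fun y => hAc ha' y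
      rw [add_lie, lie_add, lie_add, haz, haz, haz' h, zero_add, zero_add, zero_add]
      exact H.lie_mem hh'
    have hAH : A ≤ H := le_trans (le_trans hAc hZD) hDH
    apply hA0
    rw [← hinf, inf_eq_left.mpr hAH]
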